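/- Let μ, ν be finite measures on a measurable space (X, 𝒯) with μ absolutely continuous with respect to ν, and let f = dμ/dν be the Radon–Nikodym derivative. If there exist 0 < α < 1 and C > 0 such that μ(A) ≤ C ν(A)^α for all measurable A, then f belongs to weak L^p(ν) with p = 1/(1-α); that is, there exists C' > 0 such that ν({x : f(x) ≥ λ}) ≤ C' λ^{-p} for all λ > 0. -/
import Mathlib


open MeasureTheory

theorem stmt1 {X : Type*} [MeasurableSpace X] (μ ν : Measure X)
    [IsFiniteMeasure μ] [IsFiniteMeasure ν] (hac : μ ≪ ν)
    (α C : ℝ) (hα0 : 0 < α) (hα1 : α < 1) (hC : 0 < C)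
    (hbound : ∀ A : Set X, MeasurableSet A → (μ A).toReal ≤ C * (ν A).toReal ^ α) :
    ∃ C' > 0, ∀ l : ℝ, 0 < l →
      (ν {x | l ≤ (μ.rnDeriv ν x).toReal}).toReal ≤ C' * l ^ (-(1/(1-α))) := by
  have h1α : (0:ℝ) < 1 - α := by linarith
  set p : ℝ := 1 / (1 - α) with hp
  have hp0 : 0 < p := by positivity
  refine ⟨C ^ p, Real.rpow_pos_of_pos hC p, fun l hl => ?_⟩
  set A : Set X := {x | l ≤ (μ.rnDeriv ν x).toReal} with hAdef
  have hA : MeasurableSet A :=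
    measurableSet_le measurable_const (μ.measurable_rnDeriv ν).ennreal_toReal
  have h1 : ENNReal.ofReal l * ν A ≤ μ A := by
    rw [← Measure.setLIntegral_rnDeriv hac A]
    calc ENNReal.ofReal l * ν A = ∫⁻ _ in A, ENNReal.ofReal l ∂ν := by
          rw [setLIntegral_const, mul_comm]
      _ ≤ ∫⁻ x in A, μ.rnDeriv ν x ∂ν := by
          refine setLIntegral_mono (μ.measurable_rnDeriv ν) fun x hx => ?_
          exact ENNReal.ofReal_le_of_le_toReal hx
  have h1' : l * (ν A).toReal ≤ (μ A).toReal := by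
    have := ENNReal.toReal_mono (measure_ne_top μ A) h1
    rwa [ENNReal.toReal_mul, ENNReal.toReal_ofReal hl.le] at this
  set t : ℝ := (ν A).toReal with ht
  have ht0 : 0 ≤ t := ENNReal.toReal_nonneg
  have h2 : l * t ≤ C * t ^ α := le_trans h1' (hbound A hA)
  rcases eq_or_lt_of_le ht0 with h | h
  · rw [← h]
    positivity
  · have hkey : t ^ (1 - α) ≤ C / l := by
      rw [le_div_iff₀ hl]
      calc t ^ (1 - α) * l = (l * t) * t ^ (-α) := by
            rw [show (1 - α) = 1 + -α by ring, Real.rpow_add h, Real.rpow_one]; ring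
        _ ≤ (C * t ^ α) * t ^ (-α) :=
            mul_le_mul_of_nonneg_right h2 (Real.rpow_nonneg ht0 _)
        _ = C * t ^ (α + -α) := by rw [Real.rpow_add h]; ring
        _ = C := by simp
    have h3 : (t ^ (1 - α)) ^ p ≤ (C / l) ^ p :=
      Real.rpow_le_rpow (Real.rpow_nonneg ht0 _) hkey hp0.le
    have h4 : (t ^ (1 - α)) ^ p = t := by
      rw [← Real.rpow_mul ht0]
      rw [hp]
      rw [mul_one_div, div_self h1α.ne', Real.rpow_one]
    have h5 : (C / l) ^ p = C ^ p * l ^ (-p) := by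
      rw [Real.div_rpow hC.le hl.le, Real.rpow_neg hl.le, div_eq_mul_inv]
    rw [h4, h5] at h3
    simpa [hp] using h3
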